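/- Let U ∈ ℝ^{d×p} have orthonormal columns (Uᵀ U = I_p), let Σ ∈ ℝ^{p×p} be diagonal with nonnegative diagonal entries σ_1, …, σ_p, and let M ∈ ℝ^{r×d} satisfy Mᵀ M ⪯ I_d (i.e., I_d − Mᵀ M is positive semidefinite). Then det(I_r + M U Σ Uᵀ Mᵀ) ≤ det(I_p + Σ) = ∏_{i=1}^p (1 + σ_i), and hence log det(I_r + M U Σ Uᵀ Mᵀ) ≤ Σ_{i=1}^p log(1 + σ_i). -/

import Mathlib

open Matrix

lemma one_le_det_one_add_aux {n : ℕ} {S : Matrix (Fin n) (Fin n) ℝ}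
    (hS : S.PosSemidef) : 1 ≤ (1 + S).det := by
  have h := hS.1
  set V : Matrix (Fin n) (Fin n) ℝ := (h.eigenvectorUnitary : Matrix (Fin n) (Fin n) ℝ)
  have hVV : V * star V = 1 := (Matrix.mem_unitaryGroup_iff).mp h.eigenvectorUnitary.2
  set D : Matrix (Fin n) (Fin n) ℝ := diagonal (RCLike.ofReal ∘ h.eigenvalues) with hD
  have hdecomp : 1 + S = V * (1 + D) * star V := by
    rw [Matrix.mul_add, Matrix.add_mul, Matrix.mul_one, hVV]
    congr 1
    rw [h.spectral_theorem, Unitary.conjStarAlgAut_apply]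
  have hdet : (1 + S).det = (1 + D).det := by
    rw [hdecomp, det_mul, det_mul, mul_right_comm, ← det_mul, hVV, det_one, one_mul]
  rw [hdet, hD]
  have : (1 : Matrix (Fin n) (Fin n) ℝ) + diagonal (RCLike.ofReal ∘ h.eigenvalues)
      = diagonal (fun i => 1 + h.eigenvalues i) := by
    rw [← diagonal_one, diagonal_add]
    rfl
  rw [this, det_diagonal]
  calc (1:ℝ) = ∏ _i : Fin n, (1:ℝ) := by simp
    _ ≤ ∏ i, (1 + h.eigenvalues i) :=
      Finset.prod_le_prod (fun i _ => by norm_num)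
        (fun i _ => by linarith [hS.eigenvalues_nonneg i])

open scoped MatrixOrder in
lemma det_le_det_of_le_aux {n : ℕ} {A B : Matrix (Fin n) (Fin n) ℝ}
    (hA : A.PosDef) (hBA : (B - A).PosSemidef) : A.det ≤ B.det := by
  set R := CFC.sqrt A with hR
  have hRR : R * R = A := CFC.sqrt_mul_sqrt_self A hA.posSemidef.nonneg
  have hdetA : 0 < A.det := hA.det_pos
  have hdetR : IsUnit R.det := by
    have : R.det * R.det = A.det := by rw [← det_mul, hRR]
    exact isUnit_iff_ne_zero.mpr (fun h0 => by simp [h0] at this; linarith)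
  have hRH : Rᴴ = R := (CFC.sqrt_nonneg A).posSemidef.1
  have hRinvH : (R⁻¹)ᴴ = R⁻¹ := by rw [conjTranspose_nonsing_inv, hRH]
  have hQ : ((R⁻¹) * (B - A) * (R⁻¹)).PosSemidef := by
    have := hBA.conjTranspose_mul_mul_same (R⁻¹)
    rwa [hRinvH] at this
  have h1 : R * R⁻¹ = 1 := mul_nonsing_inv R hdetR
  have h2 : R⁻¹ * R = 1 := nonsing_inv_mul R hdetR
  have hB : B = R * (1 + R⁻¹ * (B - A) * R⁻¹) * R := by
    have e : R * (1 + R⁻¹ * (B - A) * R⁻¹) * R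
        = R * R + (R * R⁻¹) * (B - A) * (R⁻¹ * R) := by noncomm_ring
    rw [e, h1, h2, hRR, Matrix.one_mul, Matrix.mul_one]
    abel
  have key : B.det = A.det * (1 + R⁻¹ * (B - A) * R⁻¹).det := by
    conv_lhs => rw [hB]
    rw [det_mul, det_mul, mul_right_comm, ← det_mul, hRR]
  rw [key]
  nlinarith [one_le_det_one_add_aux hQ]

/-- Key determinant estimate: for `U` with orthonormal columns, `Σ` diagonal
nonnegative, and `Mᵀ M ⪯ I`, one has
`det (I + M U Σ Uᵀ Mᵀ) ≤ det (I + Σ) = ∏ (1 + σ_i)` and the log version. -/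
theorem stmt_4 {d p r : ℕ} (U : Matrix (Fin d) (Fin p) ℝ) (hU : Uᵀ * U = 1)
    (σ : Fin p → ℝ) (hσ : ∀ i, 0 ≤ σ i)
    (M : Matrix (Fin r) (Fin d) ℝ) (hM : (1 - Mᵀ * M).PosSemidef) :
    (1 + M * U * diagonal σ * Uᵀ * Mᵀ).det ≤ (1 + diagonal σ).det ∧
    (1 + diagonal σ).det = ∏ i, (1 + σ i) ∧
    Real.log (1 + M * U * diagonal σ * Uᵀ * Mᵀ).det ≤
      ∑ i, Real.log (1 + σ i) := by
  set A : Matrix (Fin r) (Fin p) ℝ := M * U with hA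
  set E : Matrix (Fin p) (Fin p) ℝ := diagonal (fun i => Real.sqrt (σ i)) with hE
  have hEE : E * E = diagonal σ := by
    have : (fun i => Real.sqrt (σ i) * Real.sqrt (σ i)) = σ :=
      funext fun i => Real.mul_self_sqrt (hσ i)
    rw [hE, diagonal_mul_diagonal, this]
  have hEH : Eᴴ = E := by
    rw [hE, diagonal_conjTranspose]
    simp
  have hUH : Uᴴ = Uᵀ := by ext i j; simp [conjTranspose_apply]
  have hAH : Aᴴ = Aᵀ := by ext i j; simp [conjTranspose_apply]
  -- 1 - AᵀA is psd
  have hAA : (1 - Aᵀ * A).PosSemidef := by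
    have heq : Uᴴ * (1 - Mᵀ * M) * U = 1 - Aᵀ * A := by
      rw [hUH, hA, transpose_mul]
      rw [Matrix.mul_sub, Matrix.sub_mul, Matrix.mul_one, hU]
      simp only [Matrix.mul_assoc]
    have := hM.conjTranspose_mul_mul_same U
    rwa [heq] at this
  set Q : Matrix (Fin p) (Fin p) ℝ := E * (Aᵀ * A) * E with hQ
  have hQpsd : Q.PosSemidef := by
    have h0 : (Aᵀ * A).PosSemidef := by
      have := posSemidef_conjTranspose_mul_self A
      rwa [hAH] at this
    have := h0.conjTranspose_mul_mul_same E
    rwa [hEH] at this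
  have h1Q : (1 + Q).PosDef := by
    have hone : (1 : Matrix (Fin p) (Fin p) ℝ).PosDef := by
      rw [← diagonal_one]
      exact .diagonal fun i => one_pos
    exact hone.add_posSemidef hQpsd
  have hDQ : ((1 + diagonal σ) - (1 + Q)).PosSemidef := by
    have heq : (1 + diagonal σ) - (1 + Q) = Eᴴ * (1 - Aᵀ * A) * E := by
      rw [hEH, Matrix.mul_sub, Matrix.sub_mul, Matrix.mul_one, hEE, ← hQ]
      abel
    rw [heq]
    exact hAA.conjTranspose_mul_mul_same E
  -- rewrite the LHS determinant
  have hdet_eq : (1 + M * U * diagonal σ * Uᵀ * Mᵀ).det = (1 + Q).det := by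
    have h1 : M * U * diagonal σ * Uᵀ * Mᵀ = (A * E) * (E * Aᵀ) := by
      rw [hA, ← hEE, transpose_mul]
      simp only [Matrix.mul_assoc]
    rw [h1, det_one_add_mul_comm, hQ]
    congr 2
    simp only [Matrix.mul_assoc]
  have hmain : (1 + M * U * diagonal σ * Uᵀ * Mᵀ).det ≤ (1 + diagonal σ).det := by
    rw [hdet_eq]
    exact det_le_det_of_le_aux h1Q hDQ
  have hprod : (1 + diagonal σ).det = ∏ i, (1 + σ i) := by
    have : (1 : Matrix (Fin p) (Fin p) ℝ) + diagonal σ = diagonal (fun i => 1 + σ i) := by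
      rw [← diagonal_one, diagonal_add]
    rw [this, det_diagonal]
  refine ⟨hmain, hprod, ?_⟩
  have hpos : 0 < (1 + M * U * diagonal σ * Uᵀ * Mᵀ).det := by
    rw [hdet_eq]; exact h1Q.det_pos
  calc Real.log (1 + M * U * diagonal σ * Uᵀ * Mᵀ).det
      ≤ Real.log (1 + diagonal σ).det := Real.log_le_log hpos hmain
    _ = Real.log (∏ i, (1 + σ i)) := by rw [hprod]
    _ = ∑ i, Real.log (1 + σ i) :=
      Real.log_prod (fun i _ => by have := hσ i; positivity)
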